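/- arXiv:0807.4169 — 2 statements merged into one kernel-verified Lean document; each statement's English description precedes it below -/
import Mathlib

section
/- Let k ≥ 1. The map μ ↦ χ_μ is a group isomorphism from (G_k, ⊠) onto the group X(Y^(k)) of characters of Y^(k), endowed with the convolution product. -/
open scoped TensorProduct

noncomputable section

namespace FreeProb

attribute [local instance] Classical.propDecidable

/-! ### Non-crossing partitions of `{1,…,n}`, modelled as setoids on `Fin n` -/

/-- The partition `0_n` of `Fin n` into singletons. -/
def botS (n : ℕ) : Setoid (Fin n) := ⟨Eq, eq_equivalence⟩

/-- The partition `1_n` of `Fin n` with a single block. -/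
def topS (n : ℕ) : Setoid (Fin n) :=
  ⟨fun _ _ => True, ⟨fun _ => trivial, fun _ => trivial, fun _ _ => trivial⟩⟩

/-- A partition is non-crossing if there is no crossing `a < b < c < d` with
`a ∼ c`, `b ∼ d` lying in different blocks. -/
def IsNC {n : ℕ} (s : Setoid (Fin n)) : Prop :=
  ∀ a b c d : Fin n, a < b → b < c → c < d → s.r a c → s.r b d → s.r a b

/-- The lattice `NC(n)` of non-crossing partitions, ordered by reversed refinement
(the order inherited from the lattice of setoids). -/
abbrev NC (n : ℕ) := {s : Setoid (Fin n) // IsNC s}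

instance (n : ℕ) : Finite (Setoid (Fin n)) :=
  Finite.of_injective (fun s => s.r) (by intro s t h; cases s; cases t; cases h; rfl)

noncomputable instance (n : ℕ) : Fintype (Setoid (Fin n)) := Fintype.ofFinite _

noncomputable instance (n : ℕ) : Fintype (NC n) := Fintype.ofFinite _

/-- `0_n` as a non-crossing partition. -/
def ncBot (n : ℕ) : NC n :=
  ⟨botS n, by
    intro a b c d h1 h2 h3 hac _
    have hac' : a = c := hac
    subst hac'
    exact absurd (h1.trans h2) (lt_irrefl _)⟩

/-- `1_n` as a non-crossing partition. -/
def ncTop (n : ℕ) : NC n := ⟨topS n, fun _ _ _ _ _ _ _ _ _ => trivial⟩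

/-- The blocks of a partition, as a finset of finsets. -/
def blocks {n : ℕ} (s : Setoid (Fin n)) : Finset (Finset (Fin n)) :=
  Finset.univ.image fun a => Finset.univ.filter fun b => s.r a b

/-- The next element of the block of `b`, in increasing cyclic order. -/
def nextFun {n : ℕ} (s : Setoid (Fin n)) (b : Fin n) : Fin n :=
  let B : Finset (Fin n) := Finset.univ.filter fun a => s.r b a
  let A : Finset (Fin n) := B.filter fun a => b < a
  if h : A.Nonempty then A.min' h
  else B.min' ⟨b, Finset.mem_filter.mpr ⟨Finset.mem_univ b, s.iseqv.refl b⟩⟩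

/-- The permutation `P_π` associated to a partition `π`: its cycles are the blocks
of `π`, traversed in increasing order.  (The function `nextFun` is indeed bijective,
so the `dite` below always takes its first branch.) -/
def permOf {n : ℕ} (s : Setoid (Fin n)) : Equiv.Perm (Fin n) :=
  if h : Function.Bijective (nextFun s) then Equiv.ofBijective _ h else 1

/-- The partition of `Fin n` into the cycles (orbits) of a permutation. -/
def cycleSetoid {n : ℕ} (σ : Equiv.Perm (Fin n)) : Setoid (Fin n) :=
  ⟨σ.SameCycle, ⟨fun x => Equiv.Perm.SameCycle.refl σ x, fun h => h.symm, fun h h' => h.trans h'⟩⟩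

/-- The Kreweras complement `K(π)`, determined by `P_{K(π)} = P_π⁻¹ * P_{1_n}`. -/
def kreweras {n : ℕ} (s : Setoid (Fin n)) : Setoid (Fin n) :=
  cycleSetoid ((permOf s)⁻¹ * permOf (topS n))

/-- The relative Kreweras complement `K_t(s)`, determined by `P_{K_t(s)} = P_s⁻¹ * P_t`. -/
def relKreweras {n : ℕ} (s t : Setoid (Fin n)) : Setoid (Fin n) :=
  cycleSetoid ((permOf s)⁻¹ * permOf t)

/-! ### Words, and the Hopf algebra `Y^(k)` -/

/-- Words over the alphabet `{1,…,k}`, encoded as pairs `⟨n, w⟩` with `w : Fin n → Fin k`. -/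
abbrev WordIdx (k : ℕ) := Σ n : ℕ, Fin n → Fin k

/-- The commutative polynomial algebra `Y^(k) = ℂ[Y_w : |w| ≥ 2]`. -/
abbrev Yalg (k : ℕ) := MvPolynomial {p : WordIdx k // 2 ≤ p.1} ℂ

/-- The generator `Y_w`, with the convention `Y_w = 1` for `|w| ≤ 1`. -/
def Ygen {k : ℕ} (p : WordIdx k) : Yalg k :=
  if h : 2 ≤ p.1 then MvPolynomial.X ⟨p, h⟩ else 1

/-- The subword `w|B` of `w` on the positions in `B` (in increasing order). -/
def subword {k n : ℕ} (w : Fin n → Fin k) (B : Finset (Fin n)) : Fin B.card → Fin k :=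
  fun i => w (B.orderIsoOfFin rfl i).1

/-- The element `Y_{w;π} = ∏_{B block of π} Y_{w|B}`. -/
def Yprod {k n : ℕ} (w : Fin n → Fin k) (s : Setoid (Fin n)) : Yalg k :=
  ∏ B ∈ blocks s, Ygen ⟨B.card, subword w B⟩

/-- The comultiplication of `Y^(k)`:
`Δ(Y_w) = ∑_{π ∈ NC(n)} Y_{w;π} ⊗ Y_{w;K(π)}`. -/
def Δk (k : ℕ) : Yalg k →ₐ[ℂ] Yalg k ⊗[ℂ] Yalg k :=
  MvPolynomial.aeval fun q : {p : WordIdx k // 2 ≤ p.1} =>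
    ∑ π : NC q.1.1, Yprod q.1.2 π.1 ⊗ₜ[ℂ] Yprod q.1.2 (kreweras π.1)

/-- The counit of `Y^(k)`: `ε(Y_w) = 0` for `|w| ≥ 2`. -/
def εk (k : ℕ) : Yalg k →ₐ[ℂ] ℂ := MvPolynomial.aeval fun _ => 0

/-- The grading of `Y^(k)` in which `Y_w` is homogeneous of degree `|w| - 1`. -/
def Ycomp (k n : ℕ) : Submodule ℂ (Yalg k) :=
  MvPolynomial.weightedHomogeneousSubmodule ℂ (fun q : {p : WordIdx k // 2 ≤ p.1} => q.1.1 - 1) n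

/-! ### Convolution of linear functionals on a bialgebra -/

variable {A : Type} [CommRing A] [Algebra ℂ A]

/-- Convolution `ξη := mult ∘ (ξ ⊗ η) ∘ Δ` of two linear functionals. -/
def convF (D : A →ₐ[ℂ] A ⊗[ℂ] A) (ξ η : A →ₗ[ℂ] ℂ) : A →ₗ[ℂ] ℂ :=
  LinearMap.mul' ℂ ℂ ∘ₗ TensorProduct.map ξ η ∘ₗ D.toLinearMap

/-- Convolution powers `ξ^m`, with `ξ^0 := e` (the counit). -/
def convPowF (D : A →ₐ[ℂ] A ⊗[ℂ] A) (e ξ : A →ₗ[ℂ] ℂ) : ℕ → (A →ₗ[ℂ] ℂ)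
  | 0 => e
  | m + 1 => convF D (convPowF D e ξ m) ξ

/-- `(log η)(x) = -∑_{ℓ ≥ 1} (1/ℓ) (e - η)^ℓ (x)`, the logarithm of a functional `η`
with respect to convolution (`e` is the counit).  On each `x` the sum has only finitely
many nonzero terms, so the `tsum` below is the honest value. -/
def logFunF (D : A →ₐ[ℂ] A ⊗[ℂ] A) (e η : A →ₗ[ℂ] ℂ) (x : A) : ℂ :=
  -∑' ℓ : ℕ, (1 / ((ℓ : ℂ) + 1)) * convPowF D e (e - η) (ℓ + 1) x

/-! ### Distributions, R-transforms, free multiplicative convolution -/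

/-- A distribution (or a family of coefficients of a power series in `k` non-commuting
indeterminates), encoded by its values on all words. -/
abbrev Dist (k : ℕ) := WordIdx k → ℂ

/-- `μ ∈ G_k`: `μ(1) = 1` and `μ(X_i) = 1` for all `i`. -/
def InG {k : ℕ} (μ : Dist k) : Prop :=
  (∀ w : Fin 0 → Fin k, μ ⟨0, w⟩ = 1) ∧ (∀ w : Fin 1 → Fin k, μ ⟨1, w⟩ = 1)

/-- `Cf_{w;π}(f) = ∏_{B block of π} Cf_{w|B}(f)`, for a coefficient family `α`. -/
def cfPart {k n : ℕ} (α : Dist k) (w : Fin n → Fin k) (s : Setoid (Fin n)) : ℂ :=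
  ∏ B ∈ blocks s, α ⟨B.card, subword w B⟩

/-- `α` is (the coefficient family of) the R-transform of `μ`:
the moment–cumulant relations hold. -/
def IsRTransform {k : ℕ} (μ α : Dist k) : Prop :=
  (∀ w : Fin 0 → Fin k, α ⟨0, w⟩ = 0) ∧
  ∀ (n : ℕ) (w : Fin n → Fin k), 1 ≤ n → μ ⟨n, w⟩ = ∑ π : NC n, cfPart α w π.1

/-- `γ` is the R-transform of the free multiplicative convolution of distributions
with R-transforms `α` and `β`:
`Cf_w(R_{μ⊠ν}) = ∑_{π ∈ NC(n)} Cf_{w;π}(R_μ) Cf_{w;K(π)}(R_ν)`. -/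
def IsBoxtimes {k : ℕ} (α β γ : Dist k) : Prop :=
  ∀ (n : ℕ) (w : Fin n → Fin k), 1 ≤ n →
    γ ⟨n, w⟩ = ∑ π : NC n, cfPart α w π.1 * cfPart β w (kreweras π.1)

/-- The unit `μ_o` of `(G_k, ⊠)`: all moments equal to `1`. -/
def distUnit (k : ℕ) : Dist k := fun _ => 1

/-- The character `χ_μ` of `Y^(k)` associated to a distribution with R-transform `α`:
`χ_μ(Y_w) = Cf_w(R_μ)`. -/
def charOf {k : ℕ} (α : Dist k) : Yalg k →ₐ[ℂ] ℂ :=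
  MvPolynomial.aeval fun q => α q.1

/-- The generalized coefficient `Cf_w^(Γ)(f) = ∏_{j=1}^{ℓ} Cf_{w;K_{π_j}(π_{j-1})}(f)`
attached to a (multi-)chain `Γ = (π_0,…,π_{m+1})` in `NC(n)`. -/
def cfChain {k n : ℕ} (α : Dist k) (w : Fin n → Fin k) (m : ℕ)
    (c : Fin (m + 2) → Setoid (Fin n)) : ℂ :=
  ∏ j : Fin (m + 1), cfPart α w (relKreweras (c j.castSucc) (c j.succ))

/-- The `i`-th marginal coefficients: the free cumulants of the `i`-th marginal `μ_i`
are `Cf_{(i,…,i)}(R_μ)`. -/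
def margFam {k : ℕ} (α : Dist k) (i : Fin k) : Dist 1 := fun q => α ⟨q.1, fun _ => i⟩


/-! ### Iterated comultiplication -/

/-- The iterated tensor powers `Y^(k) ⊗ ⋯ ⊗ Y^(k)` (`m+1` factors), as objects of
`ModuleCat ℂ` so that the recursion carries its module structure. -/
def YpowM (k : ℕ) : ℕ → ModuleCat ℂ
  | 0 => ModuleCat.of ℂ (Yalg k)
  | m + 1 => ModuleCat.of ℂ (Yalg k ⊗[ℂ] YpowM k m)

/-- The iterated comultiplication: `Δiter k m = Δ^{m+1}` in the notation of the paper
(`Δiter k 0 = id`, `Δiter k (m+1) = (id ⊗ Δ^{m+1}) ∘ Δ`). -/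
def Δiter (k : ℕ) : ∀ m : ℕ, Yalg k →ₗ[ℂ] YpowM k m
  | 0 => LinearMap.id
  | m + 1 => TensorProduct.map LinearMap.id (Δiter k m) ∘ₗ (Δk k).toLinearMap

/-- The pure tensor `Y_{w;K_{π_1}(π_0)} ⊗ ⋯ ⊗ Y_{w;K_{π_{m+1}}(π_m)}` attached to a
multi-chain `(π_0, …, π_{m+1})`. -/
def chainTensor {k n : ℕ} (w : Fin n → Fin k) :
    ∀ m : ℕ, (Fin (m + 2) → Setoid (Fin n)) → YpowM k m
  | 0, c => Yprod w (relKreweras (c 0) (c 1))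
  | m + 1, c => Yprod w (relKreweras (c 0) (c 1)) ⊗ₜ[ℂ] chainTensor w m (fun i => c i.succ)


/-! ### One-variable power series tools -/

/-- The R-transform of a one-variable distribution, as a power series. -/
def Rser (α : Dist 1) : PowerSeries ℂ :=
  PowerSeries.mk fun m => if m = 0 then 0 else α ⟨m, fun _ => 0⟩

/-- Composition `f ∘ g` of formal power series (the honest composition whenever
`g` has vanishing constant term). -/
def psComp (f g : PowerSeries ℂ) : PowerSeries ℂ :=
  PowerSeries.mk fun m =>
    ∑ j ∈ Finset.range (m + 1), PowerSeries.coeff (R := ℂ) j f * PowerSeries.coeff (R := ℂ) m (g ^ j)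

/-- `S` is the S-transform of the distribution with R-transform `α`:
`S(z) = (1/z)·R^{⟨-1⟩}(z)`, i.e. `z·S(z)` is the compositional inverse of `R`. -/
def SChar (α : Dist 1) (S : PowerSeries ℂ) : Prop :=
  PowerSeries.constantCoeff (R := ℂ) S = 1 ∧
  psComp (Rser α) (PowerSeries.X * S) = PowerSeries.X ∧
  psComp (PowerSeries.X * S) (Rser α) = PowerSeries.X

/-- The formal logarithm `log f = -∑_{ℓ≥1} (1/ℓ)(1-f)^ℓ = ∑_{ℓ≥1} ((-1)^{ℓ+1}/ℓ)(f-1)^ℓ`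
of a power series (the honest logarithm whenever `f` has constant term 1). -/
def psLog {B : Type} [CommRing B] [Algebra ℂ B] (f : PowerSeries B) : PowerSeries B :=
  PowerSeries.mk fun m =>
    ∑ ℓ ∈ Finset.range (m + 1), ((-1 : ℂ) ^ (ℓ + 1) / ℓ) • PowerSeries.coeff (R := B) m ((f - 1) ^ ℓ)

/-- The coefficient-wise LS-transform of a one-variable distribution, as a power series. -/
def LSseries (α : Dist 1) : PowerSeries ℂ :=
  PowerSeries.mk fun n =>
    if 2 ≤ n then
      logFunF (Δk 1) (εk 1).toLinearMap (charOf α).toLinearMap (Ygen ⟨n, fun _ => 0⟩)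
    else 0

/-! ### The Hopf algebra `Sym` of symmetric functions -/

/-- `Sym`, realized as the free commutative algebra on the complete homogeneous
symmetric functions `h_1, h_2, …`. -/
abbrev SymA := MvPolynomial {m : ℕ // 1 ≤ m} ℂ

/-- The complete homogeneous symmetric function `h_m` (with `h_0 = 1`). -/
def Hgen (m : ℕ) : SymA := if h : 1 ≤ m then MvPolynomial.X ⟨m, h⟩ else 1

/-- The comultiplication of `Sym`: `Δ(h_n) = ∑_{i=0}^n h_i ⊗ h_{n-i}`. -/
def ΔSym : SymA →ₐ[ℂ] SymA ⊗[ℂ] SymA :=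
  MvPolynomial.aeval fun q : {m : ℕ // 1 ≤ m} =>
    ∑ i ∈ Finset.range (q.1 + 1), Hgen i ⊗ₜ[ℂ] Hgen (q.1 - i)

/-- The counit of `Sym`. -/
def εSym : SymA →ₐ[ℂ] ℂ := MvPolynomial.aeval fun _ => 0

/-- The generating series `h(z) = 1 + ∑ (-1)^n h_n z^n`. -/
def hSymSeries : PowerSeries SymA :=
  PowerSeries.mk fun m => if m = 0 then 1 else (-1 : SymA) ^ m * Hgen m

/-- The generating series `e(z) = 1 + ∑ e_n z^n = 1/h(z)`. -/
def eSymSeries : PowerSeries SymA := PowerSeries.invOfUnit hSymSeries 1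

/-- The elementary symmetric function `e_m`, defined through `e(z) = 1/h(z)`. -/
def eSym (m : ℕ) : SymA := PowerSeries.coeff (R := SymA) m eSymSeries

/-- The power sum symmetric function `p_m`, defined through
`log e(z) = ∑_{m≥1} ((-1)^{m+1}/m) p_m z^m`. -/
def pSym (m : ℕ) : SymA :=
  ((-1 : ℂ) ^ (m + 1) * m) • PowerSeries.coeff (R := SymA) m (psLog eSymSeries)

/-- The grading of `Sym` (`h_n` homogeneous of degree `n`). -/
def SymComp (n : ℕ) : Submodule ℂ SymA :=
  MvPolynomial.weightedHomogeneousSubmodule ℂ (fun q : {m : ℕ // 1 ≤ m} => q.1) n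

/-- The symmetric function `y_n = ∑_{π ∈ NC(n-1)} ∏_{B block of π} e_{|B|}`. -/
def ySym (n : ℕ) : SymA := ∑ π : NC (n - 1), ∏ B ∈ blocks π.1, eSym B.card

/-- The homomorphism `Φ : Y^(1) → Sym`, `Φ(Y_n) = y_n`. -/
def Phi : Yalg 1 →ₐ[ℂ] SymA := MvPolynomial.aeval fun q => ySym q.1.1

/-- The character `θ_μ` of `Sym` attached to a distribution with S-transform `S`:
`θ_μ(h_n) = (-1)^n β_n` where `S(z) = 1 + ∑ β_n z^n`. -/
def thetaOf (S : PowerSeries ℂ) : SymA →ₐ[ℂ] ℂ :=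
  MvPolynomial.aeval fun q : {m : ℕ // 1 ≤ m} =>
    (-1 : ℂ) ^ q.1 * PowerSeries.coeff (R := ℂ) q.1 S

/-- Infinitesimal characters of `Sym`. -/
def IsInfCharSym (ξ : SymA →ₗ[ℂ] ℂ) : Prop :=
  ∀ u v : SymA, ξ (u * v) = ξ u * εSym v + εSym u * ξ v


/-! ### Auxiliary lemmas (added for the proof) -/

instance fin1_setoid_subsingleton : Subsingleton (Setoid (Fin 1)) :=
  ⟨fun s t => Setoid.ext fun a b => by
    obtain rfl : a = b := Subsingleton.elim a b
    exact ⟨fun _ => t.iseqv.refl a, fun _ => s.iseqv.refl a⟩⟩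

lemma blocks_fin_one (s : Setoid (Fin 1)) : blocks s = {Finset.univ} := by
  have hfix : ∀ a : Fin 1, (Finset.univ.filter fun b => s.r a b) = Finset.univ := by
    intro a
    ext b
    simp only [Finset.mem_filter, Finset.mem_univ, true_and, iff_true]
    obtain rfl : a = b := Subsingleton.elim a b
    exact s.iseqv.refl a
  unfold blocks
  ext B
  simp only [Finset.mem_image, Finset.mem_univ, true_and, Finset.mem_singleton]
  constructor
  · rintro ⟨a, rfl⟩
    exact hfix a
  · intro h
    exact ⟨0, (hfix 0).trans h.symm⟩

lemma dist_fin_one_eq {k : ℕ} (α : Dist k) (w : Fin 1 → Fin k) {m : ℕ} (hm : m = 1)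
    (f : Fin m → Fin k) (hf : ∀ i, f i = w ⟨0, Nat.one_pos⟩) :
    α ⟨m, f⟩ = α ⟨1, w⟩ := by
  subst hm
  have hfw : f = w := funext fun i => (hf i).trans (congrArg w (Subsingleton.elim _ _))
  rw [hfw]

lemma cfPart_one {k : ℕ} (α : Dist k) (w : Fin 1 → Fin k) (s : Setoid (Fin 1)) :
    cfPart α w s = α ⟨1, w⟩ := by
  unfold cfPart
  rw [blocks_fin_one, Finset.prod_singleton]
  exact dist_fin_one_eq α w (by simp) _ (fun i => congrArg w (Subsingleton.elim _ _))

lemma mem_blocks_card_pos {n : ℕ} {s : Setoid (Fin n)} {B : Finset (Fin n)}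
    (hB : B ∈ blocks s) : 0 < B.card := by
  simp only [blocks, Finset.mem_image, Finset.mem_univ, true_and] at hB
  obtain ⟨a, rfl⟩ := hB
  exact Finset.card_pos.mpr ⟨a, Finset.mem_filter.mpr ⟨Finset.mem_univ a, s.iseqv.refl a⟩⟩

lemma dist_card_one {k : ℕ} (α : Dist k) (hα1 : ∀ w : Fin 1 → Fin k, α ⟨1, w⟩ = 1)
    {m : ℕ} (hm : m = 1) (f : Fin m → Fin k) : α ⟨m, f⟩ = 1 := by
  subst hm
  exact hα1 f

lemma alpha_len_one {k : ℕ} {μ α : Dist k} (hμ : InG μ) (hα : IsRTransform μ α)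
    (w : Fin 1 → Fin k) : α ⟨1, w⟩ = 1 := by
  haveI : Unique (NC 1) := uniqueOfSubsingleton (ncBot 1)
  have h := hα.2 1 w le_rfl
  rw [hμ.2 w, Fintype.sum_unique, cfPart_one] at h
  exact h.symm

lemma charOf_Yprod {k n : ℕ} (α : Dist k) (hα1 : ∀ w : Fin 1 → Fin k, α ⟨1, w⟩ = 1)
    (w : Fin n → Fin k) (s : Setoid (Fin n)) : charOf α (Yprod w s) = cfPart α w s := by
  unfold Yprod cfPart
  rw [map_prod]
  refine Finset.prod_congr rfl fun B hB => ?_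
  unfold Ygen
  split_ifs with h
  · exact MvPolynomial.aeval_X _ _
  · rw [map_one]
    have h' : ¬ 2 ≤ B.card := h
    have h1 : B.card = 1 := by
      have := mem_blocks_card_pos hB
      omega
    exact (dist_card_one α hα1 h1 _).symm

lemma charOf_X {k : ℕ} (α : Dist k) (q : {p : WordIdx k // 2 ≤ p.1}) :
    charOf α (MvPolynomial.X q) = α q.1 :=
  MvPolynomial.aeval_X _ q

lemma rtransform_ext {k : ℕ} {μ ν α β : Dist k} (hμ : InG μ) (hν : InG ν)
    (hα : IsRTransform μ α) (hβ : IsRTransform ν β) (h : charOf α = charOf β) : α = β := by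
  funext p
  rcases p with ⟨(_ | _ | n), w⟩
  · rw [hα.1 w, hβ.1 w]
  · rw [alpha_len_one hμ hα w, alpha_len_one hν hβ w]
  · have h2 : 2 ≤ n + 2 := by omega
    have h3 := congrArg (fun f : Yalg k →ₐ[ℂ] ℂ => f (MvPolynomial.X ⟨⟨n + 2, w⟩, h2⟩)) h
    simpa [charOf, MvPolynomial.aeval_X] using h3

/-- The R-transform coefficients attached to a character `η`. -/
def alphaOf {k : ℕ} (η : Yalg k →ₐ[ℂ] ℂ) : Dist k :=
  fun p => if h : 2 ≤ p.1 then η (MvPolynomial.X ⟨p, h⟩) else if p.1 = 1 then 1 else 0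

/-- The distribution attached to a character `η`, via moment–cumulant relations. -/
def muOf {k : ℕ} (η : Yalg k →ₐ[ℂ] ℂ) : Dist k :=
  fun p => if 1 ≤ p.1 then ∑ π : NC p.1, cfPart (alphaOf η) p.2 π.1 else 1

lemma alphaOf_len_one {k : ℕ} (η : Yalg k →ₐ[ℂ] ℂ) (w : Fin 1 → Fin k) :
    alphaOf η ⟨1, w⟩ = 1 := by
  unfold alphaOf
  rw [dif_neg (show ¬ (2 : ℕ) ≤ 1 by omega), if_pos rfl]

/-- Theorem 1.2 / Proposition 3.7.  The map `μ ↦ χ_μ` is a group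
isomorphism from `(G_k, ⊠)` onto the group of characters of `Y^(k)` with convolution:
it is injective, surjective onto the characters, and it transforms `⊠` into
convolution. -/
theorem char_map_group_iso (k : ℕ) (hk : 1 ≤ k) :
    -- injectivity of `μ ↦ χ_μ` on `G_k`
    (∀ μ ν α β : Dist k, InG μ → InG ν → IsRTransform μ α → IsRTransform ν β →
      charOf α = charOf β → μ = ν) ∧
    -- surjectivity onto the set of characters of `Y^(k)`
    (∀ η : Yalg k →ₐ[ℂ] ℂ, ∃ μ α : Dist k, InG μ ∧ IsRTransform μ α ∧ charOf α = η) ∧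
    -- homomorphism property: `χ_{μ ⊠ ν} = χ_μ · χ_ν` (convolution)
    (∀ μ ν α β γ : Dist k, InG μ → InG ν → IsRTransform μ α → IsRTransform ν β →
      IsBoxtimes α β γ →
      (charOf γ).toLinearMap =
        convF (Δk k) (charOf α).toLinearMap (charOf β).toLinearMap) := by
  refine ⟨?_, ?_, ?_⟩
  · -- injectivity
    intro μ ν α β hμ hν hα hβ h
    have hab : α = β := rtransform_ext hμ hν hα hβ h
    subst hab
    funext p
    rcases p with ⟨(_ | n), w⟩
    · rw [hμ.1 w, hν.1 w]
    · rw [hα.2 (n + 1) w (by omega), hβ.2 (n + 1) w (by omega)]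
  · -- surjectivity
    intro η
    refine ⟨muOf η, alphaOf η, ⟨?_, ?_⟩, ⟨?_, ?_⟩, ?_⟩
    · intro w
      exact if_neg (show ¬ (1 : ℕ) ≤ 0 by omega)
    · intro w
      haveI : Unique (NC 1) := uniqueOfSubsingleton (ncBot 1)
      show (if 1 ≤ 1 then ∑ π : NC 1, cfPart (alphaOf η) w π.1 else 1) = 1
      rw [if_pos le_rfl, Fintype.sum_unique, cfPart_one, alphaOf_len_one]
    · intro w
      show (if h : 2 ≤ 0 then _ else if (0 : ℕ) = 1 then (1 : ℂ) else 0) = 0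
      rw [dif_neg (show ¬ (2 : ℕ) ≤ 0 by omega), if_neg (by omega)]
    · intro n w hn
      exact (if_pos hn : muOf η ⟨n, w⟩ = _)
    · apply MvPolynomial.algHom_ext
      intro q
      simp only [charOf, MvPolynomial.aeval_X]
      show alphaOf η q.1 = η (MvPolynomial.X q)
      unfold alphaOf
      rw [dif_pos q.2]
  · -- homomorphism property
    intro μ ν α β γ hμ hν hα hβ hγ
    have hα1 := alpha_len_one hμ hα
    have hβ1 := alpha_len_one hν hβ
    have key : charOf γ =
        (Algebra.TensorProduct.lmul' ℂ).comp
          ((Algebra.TensorProduct.map (charOf α) (charOf β)).comp (Δk k)) := by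
      apply MvPolynomial.algHom_ext
      intro q
      simp only [AlgHom.comp_apply]
      rw [charOf_X γ q]
      rw [show (Δk k) (MvPolynomial.X q)
            = ∑ π : NC q.1.1, Yprod q.1.2 π.1 ⊗ₜ[ℂ] Yprod q.1.2 (kreweras π.1) from
          MvPolynomial.aeval_X _ q]
      rw [map_sum, map_sum]
      have hq : γ q.1 = ∑ π : NC q.1.1,
          cfPart α q.1.2 π.1 * cfPart β q.1.2 (kreweras π.1) :=
        hγ q.1.1 q.1.2 (by have := q.2; omega)
      rw [hq]
      refine Finset.sum_congr rfl fun π _ => ?_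
      rw [Algebra.TensorProduct.map_tmul, Algebra.TensorProduct.lmul'_apply_tmul,
        charOf_Yprod α hα1, charOf_Yprod β hβ1]
    rw [key]
    apply LinearMap.ext
    intro x
    have hten : ∀ y : Yalg k ⊗[ℂ] Yalg k,
        (Algebra.TensorProduct.lmul' (S := ℂ) ℂ) (Algebra.TensorProduct.map (charOf α) (charOf β) y)
          = LinearMap.mul' ℂ ℂ
              (TensorProduct.map (charOf α).toLinearMap (charOf β).toLinearMap y) := by
      intro y
      induction y using TensorProduct.induction_on with
      | zero => simp
      | tmul a b =>
        simp [Algebra.TensorProduct.map_tmul, Algebra.TensorProduct.lmul'_apply_tmul,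
          TensorProduct.map_tmul, LinearMap.mul'_apply]
      | add u v hu hv => simp only [map_add, hu, hv]
    simp only [convF, LinearMap.comp_apply, AlgHom.toLinearMap_apply, AlgHom.comp_apply]
    exact hten ((Δk k) x)

end FreeProb

end
end

section
/- Let μ ∈ G_1, and write R_μ(z) = z + Σ_{n≥2} α_n z^n and 1/S_μ(z) = 1 + Σ_{n≥1} γ_n z^n, where 1/S_μ is the multiplicative inverse of the S-transform in ℂ[[z]]. Then for every n ≥ 2, α_n = Σ_{π = {A_1,…,A_q} ∈ NC(n−1)} γ_{|A_1|}⋯γ_{|A_q|}. -/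
open scoped TensorProduct

noncomputable section

namespace FreeProb

attribute [local instance] Classical.propDecidable

/-! ### Convolution of linear functionals on a bialgebra -/

variable {A : Type} [CommRing A] [Algebra ℂ A]

/-! ### Auxiliary power series lemmas -/

section PSAux

open PowerSeries

lemma coeff_psComp (f g : PowerSeries ℂ) (m : ℕ) :
    coeff (R := ℂ) m (psComp f g) =
      ∑ j ∈ Finset.range (m + 1), coeff (R := ℂ) j f * coeff (R := ℂ) m (g ^ j) := by
  rw [psComp, coeff_mk]

lemma coeff_pow_eq_zero' {g : PowerSeries ℂ} (hg : constantCoeff (R := ℂ) g = 0) {m j : ℕ}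
    (h : m < j) : coeff (R := ℂ) m (g ^ j) = 0 := by
  obtain ⟨q, hq⟩ : (X : PowerSeries ℂ) ^ j ∣ g ^ j :=
    pow_dvd_pow_of_dvd (X_dvd_iff.mpr hg) j
  rw [hq, coeff_mul]
  refine Finset.sum_eq_zero fun p hp => ?_
  rw [Finset.HasAntidiagonal.mem_antidiagonal] at hp
  rw [coeff_X_pow, if_neg (by omega), zero_mul]

lemma coeff_psComp_ext {g : PowerSeries ℂ} (hg : constantCoeff (R := ℂ) g = 0)
    (f : PowerSeries ℂ) {m N : ℕ} (h : m ≤ N) :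
    coeff (R := ℂ) m (psComp f g) =
      ∑ j ∈ Finset.range (N + 1), coeff (R := ℂ) j f * coeff (R := ℂ) m (g ^ j) := by
  rw [coeff_psComp]
  refine Finset.sum_subset (Finset.range_subset_range.2 (by omega)) fun x hx hnx => ?_
  rw [Finset.mem_range] at hx hnx
  rw [coeff_pow_eq_zero' hg (by omega), mul_zero]

lemma psComp_one (g : PowerSeries ℂ) : psComp 1 g = 1 := by
  ext m
  rw [coeff_psComp]
  rw [Finset.sum_eq_single 0]
  · simp
  · intro j _ hj
    rw [coeff_one, if_neg hj, zero_mul]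
  · intro h
    exact absurd (Finset.mem_range.2 (by omega)) h

lemma psComp_X {g : PowerSeries ℂ} (hg : constantCoeff (R := ℂ) g = 0) : psComp X g = g := by
  ext m
  rw [coeff_psComp]
  rcases Nat.eq_zero_or_pos m with rfl | hm
  · simp [coeff_zero_eq_constantCoeff, hg]
  · rw [Finset.sum_eq_single 1]
    · rw [coeff_X, if_pos rfl, one_mul, pow_one]
    · intro j _ hj
      rw [coeff_X, if_neg hj, zero_mul]
    · intro h
      exact absurd (Finset.mem_range.2 (by omega)) h

private lemma triangle_sum {m : ℕ} (F : ℕ × ℕ → ℂ)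
    (hF : ∀ a b : ℕ, m < a + b → F (a, b) = 0) :
    ∑ j ∈ Finset.range (m + 1), ∑ q ∈ Finset.HasAntidiagonal.antidiagonal j, F q =
      ∑ a ∈ Finset.range (m + 1), ∑ b ∈ Finset.range (m + 1), F (a, b) := by
  have h1 : ∀ j ∈ Finset.range (m+1),
      ∑ q ∈ Finset.HasAntidiagonal.antidiagonal j, F q =
        ∑ k ∈ Finset.range (m+1), if k ≤ j then F (k, j - k) else 0 := by
    intro j hj
    rw [Finset.mem_range] at hj
    rw [Finset.Nat.sum_antidiagonal_eq_sum_range_succ_mk]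
    rw [← Finset.sum_filter]
    refine Finset.sum_congr ?_ fun _ _ => rfl
    ext k
    simp only [Finset.mem_range, Finset.mem_filter]
    omega
  rw [Finset.sum_congr rfl h1, Finset.sum_comm]
  refine Finset.sum_congr rfl fun k hk => ?_
  rw [Finset.mem_range] at hk
  rw [← Finset.sum_filter]
  have h2 : (Finset.range (m+1)).filter (fun j => k ≤ j) = Finset.Ico k (m+1) := by
    ext j; simp only [Finset.mem_range, Finset.mem_filter, Finset.mem_Ico]; omega
  rw [h2, Finset.sum_Ico_eq_sum_range]
  have h3 : ∀ b ∈ Finset.range (m + 1 - k), F (k, k + b - k) = F (k, b) := by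
    intro b _
    have hb : k + b - k = b := by omega
    rw [hb]
  rw [Finset.sum_congr rfl h3]
  refine Finset.sum_subset (Finset.range_subset_range.2 (by omega)) fun b hb hnb => ?_
  rw [Finset.mem_range] at hb hnb
  exact hF k b (by omega)

lemma psComp_mul {g : PowerSeries ℂ} (hg : constantCoeff (R := ℂ) g = 0)
    (f₁ f₂ : PowerSeries ℂ) :
    psComp (f₁ * f₂) g = psComp f₁ g * psComp f₂ g := by
  ext m
  rw [coeff_psComp, coeff_mul]
  have hR : ∀ p ∈ Finset.HasAntidiagonal.antidiagonal m,
      coeff (R := ℂ) p.1 (psComp f₁ g) * coeff (R := ℂ) p.2 (psComp f₂ g)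
      = ∑ a ∈ Finset.range (m+1), ∑ b ∈ Finset.range (m+1),
          coeff (R := ℂ) a f₁ * coeff (R := ℂ) b f₂ * (coeff (R := ℂ) p.1 (g^a) * coeff (R := ℂ) p.2 (g^b)) := by
    intro p hp
    rw [Finset.HasAntidiagonal.mem_antidiagonal] at hp
    rw [coeff_psComp_ext hg f₁ (show p.1 ≤ m by omega),
        coeff_psComp_ext hg f₂ (show p.2 ≤ m by omega), Finset.sum_mul_sum]
    exact Finset.sum_congr rfl fun a _ => Finset.sum_congr rfl fun b _ => by ring
  rw [Finset.sum_congr rfl hR]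
  rw [Finset.sum_comm]
  have hswap : ∀ a ∈ Finset.range (m+1),
      ∑ p ∈ Finset.HasAntidiagonal.antidiagonal m, ∑ b ∈ Finset.range (m+1),
        coeff (R := ℂ) a f₁ * coeff (R := ℂ) b f₂ * (coeff (R := ℂ) p.1 (g^a) * coeff (R := ℂ) p.2 (g^b))
      = ∑ b ∈ Finset.range (m+1),
          coeff (R := ℂ) a f₁ * coeff (R := ℂ) b f₂ * coeff (R := ℂ) m (g ^ (a + b)) := by
    intro a _
    rw [Finset.sum_comm]
    refine Finset.sum_congr rfl fun b _ => ?_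
    rw [← Finset.mul_sum, pow_add, coeff_mul]
  rw [Finset.sum_congr rfl hswap]
  -- LHS
  have hL : ∀ j ∈ Finset.range (m+1),
      coeff (R := ℂ) j (f₁ * f₂) * coeff (R := ℂ) m (g ^ j)
      = ∑ q ∈ Finset.HasAntidiagonal.antidiagonal j,
          (fun q : ℕ × ℕ => coeff (R := ℂ) q.1 f₁ * coeff (R := ℂ) q.2 f₂ * coeff (R := ℂ) m (g ^ (q.1 + q.2))) q := by
    intro j _
    rw [coeff_mul, Finset.sum_mul]
    refine Finset.sum_congr rfl fun q hq => ?_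
    rw [Finset.HasAntidiagonal.mem_antidiagonal] at hq
    show _ = coeff (R := ℂ) q.1 f₁ * coeff (R := ℂ) q.2 f₂ * coeff (R := ℂ) m (g ^ (q.1 + q.2))
    rw [hq]
  rw [Finset.sum_congr rfl hL, triangle_sum]
  intro a b hab
  rw [coeff_pow_eq_zero' hg hab, mul_zero]

lemma coeff_pow_congr {F G : PowerSeries ℂ} (hF : constantCoeff (R := ℂ) F = 0)
    (hG : constantCoeff (R := ℂ) G = 0) {n : ℕ}
    (ih : ∀ k < n, coeff (R := ℂ) k F = coeff (R := ℂ) k G) {j : ℕ} (hj : 2 ≤ j) :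
    coeff (R := ℂ) n (F ^ j) = coeff (R := ℂ) n (G ^ j) := by
  rw [coeff_pow, coeff_pow]
  refine Finset.sum_congr rfl fun l hl => ?_
  rw [Finset.mem_finsuppAntidiag] at hl
  by_cases hall : ∀ i ∈ Finset.range j, l i < n
  · exact Finset.prod_congr rfl fun i hi => ih _ (hall i hi)
  · push_neg at hall
    obtain ⟨i₀, hi₀, hni₀⟩ := hall
    obtain ⟨i₁, hi₁, hne⟩ : ∃ i₁ ∈ Finset.range j, i₁ ≠ i₀ := by
      by_cases h0 : i₀ = 0
      · exact ⟨1, Finset.mem_range.2 (by omega), by omega⟩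
      · exact ⟨0, Finset.mem_range.2 (by omega), by omega⟩
    have hsum : ∑ i ∈ Finset.range j, l i = n := by simpa using hl.1
    have h2 : l i₀ + ∑ i ∈ (Finset.range j).erase i₀, l i = ∑ i ∈ Finset.range j, l i :=
      Finset.add_sum_erase _ _ hi₀
    have h3 : l i₁ ≤ ∑ i ∈ (Finset.range j).erase i₀, l i :=
      Finset.single_le_sum (fun _ _ => Nat.zero_le _) (Finset.mem_erase.2 ⟨hne, hi₁⟩)
    have hl1 : l i₁ = 0 := by omega
    rw [Finset.prod_eq_zero hi₁ (by rw [hl1]; simpa using hF),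
        Finset.prod_eq_zero hi₁ (by rw [hl1]; simpa using hG)]

lemma psComp_XS_inj {S F G : PowerSeries ℂ} (hS : constantCoeff (R := ℂ) S = 1)
    (hF : constantCoeff (R := ℂ) F = 0) (hG : constantCoeff (R := ℂ) G = 0)
    (h : psComp (X * S) F = psComp (X * S) G) : F = G := by
  ext n
  induction n using Nat.strong_induction_on with
  | _ n ih =>
    rcases Nat.eq_zero_or_pos n with rfl | hn
    · simp [hF, hG]
    · have hc := congrArg (coeff (R := ℂ) n) h
      rw [coeff_psComp, coeff_psComp] at hc
      have h1mem : 1 ∈ Finset.range (n+1) := Finset.mem_range.2 (by omega)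
      rw [← Finset.add_sum_erase _ _ h1mem, ← Finset.add_sum_erase _ _ h1mem] at hc
      have hrest : ∀ j ∈ (Finset.range (n+1)).erase 1,
          coeff (R := ℂ) j (X * S) * coeff (R := ℂ) n (F ^ j)
          = coeff (R := ℂ) j (X * S) * coeff (R := ℂ) n (G ^ j) := by
        intro j hj
        rw [Finset.mem_erase] at hj
        rcases Nat.eq_zero_or_pos j with rfl | hjp
        · rw [pow_zero, pow_zero]
        · have hj2 : 2 ≤ j := by omega
          rw [coeff_pow_congr hF hG ih hj2]
      rw [Finset.sum_congr rfl hrest] at hc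
      have h1 : coeff (R := ℂ) 1 (X * S) = 1 := by
        rw [coeff_succ_X_mul, coeff_zero_eq_constantCoeff, hS]
      rw [h1, one_mul, one_mul, pow_one, pow_one] at hc
      exact add_right_cancel hc

end PSAux

/-! ### Combinatorial lemmas on non-crossing partitions -/

section Comb

variable {n : ℕ}

/-- The block of `a`. -/
def clsF (s : Setoid (Fin n)) (a : Fin n) : Finset (Fin n) :=
  Finset.univ.filter fun b => s.r a b

lemma blocks_eq (s : Setoid (Fin n)) : blocks s = Finset.univ.image (clsF s) := rfl

lemma mem_clsF {s : Setoid (Fin n)} {a b : Fin n} : b ∈ clsF s a ↔ s.r a b := by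
  simp [clsF]

lemma clsF_self (s : Setoid (Fin n)) (a : Fin n) : a ∈ clsF s a :=
  mem_clsF.2 (s.iseqv.refl a)

lemma clsF_eq_of_rel {s : Setoid (Fin n)} {a b : Fin n} (h : s.r a b) :
    clsF s a = clsF s b := by
  ext c
  rw [mem_clsF, mem_clsF]
  exact ⟨fun h' => s.iseqv.trans (s.iseqv.symm h) h', fun h' => s.iseqv.trans h h'⟩

lemma mem_blocks {s : Setoid (Fin n)} {B : Finset (Fin n)} :
    B ∈ blocks s ↔ ∃ a, B = clsF s a := by
  rw [blocks_eq]
  simp [eq_comm, clsF]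

lemma blocks_nonempty {s : Setoid (Fin n)} {B : Finset (Fin n)} (h : B ∈ blocks s) :
    B.Nonempty := by
  obtain ⟨a, rfl⟩ := mem_blocks.1 h
  exact ⟨a, clsF_self s a⟩

/-- The block of `0`, in a form that makes sense also for `Fin 0`. -/
def cls0F (s : Setoid (Fin n)) : Finset (Fin n) :=
  Finset.univ.filter fun b => ∀ a : Fin n, a.1 = 0 → s.r a b

lemma cls0F_eq {m : ℕ} (s : Setoid (Fin (m + 1))) : cls0F s = clsF s 0 := by
  ext b
  simp only [cls0F, clsF, Finset.mem_filter, Finset.mem_univ, true_and]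
  exact ⟨fun h => h 0 rfl, fun h a ha => by
    have : a = 0 := Fin.ext ha
    rw [this]; exact h⟩

lemma cls0F_zero (s : Setoid (Fin 0)) : cls0F s = ∅ := by
  ext b; exact absurd b.isLt (by omega)

lemma blocks_zero (s : Setoid (Fin 0)) : blocks s = ∅ := by
  rw [blocks_eq]
  have : (Finset.univ : Finset (Fin 0)) = ∅ := by
    ext b; exact absurd b.isLt (by omega)
  rw [this, Finset.image_empty]

/-- Weight of a partition. -/
def wbW (γ : ℕ → ℂ) {d : ℕ} (s : Setoid (Fin d)) : ℂ :=
  ∏ B ∈ blocks s, γ B.card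

/-- Weight of a partition, with the block of `0` counted with `r` extra elements. -/
def cwW (γ : ℕ → ℂ) (r : ℕ) {d : ℕ} (s : Setoid (Fin d)) : ℂ :=
  γ ((cls0F s).card + r) * ∏ B ∈ (blocks s).erase (cls0F s), γ B.card

def bSum (γ : ℕ → ℂ) (d : ℕ) : ℂ := ∑ π : NC d, wbW γ π.1

def cSum (γ : ℕ → ℂ) (r d : ℕ) : ℂ := ∑ π : NC d, cwW γ r π.1

instance : Subsingleton (Setoid (Fin 0)) :=
  ⟨fun s t => Setoid.ext fun a => a.elim0⟩

lemma bSum_zero (γ : ℕ → ℂ) : bSum γ 0 = 1 := by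
  rw [bSum, Fintype.sum_subsingleton _ (ncBot 0)]
  rw [wbW, blocks_zero, Finset.prod_empty]

lemma cSum_zero (γ : ℕ → ℂ) (r : ℕ) : cSum γ r 0 = γ r := by
  rw [cSum, Fintype.sum_subsingleton _ (ncBot 0)]
  rw [cwW, cls0F_zero, blocks_zero]
  simp

lemma cls0F_mem_blocks {m : ℕ} (s : Setoid (Fin (m + 1))) : cls0F s ∈ blocks s := by
  rw [cls0F_eq, mem_blocks]
  exact ⟨0, rfl⟩

lemma bSum_succ (γ : ℕ → ℂ) (m : ℕ) : bSum γ (m + 1) = cSum γ 0 (m + 1) := by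
  rw [bSum, cSum]
  refine Finset.sum_congr rfl fun π _ => ?_
  rw [wbW, cwW]
  simp only [Nat.add_zero]
  rw [← Finset.mul_prod_erase _ _ (cls0F_mem_blocks π.1)]

/-! #### Restriction along an embedding -/

/-- Restriction of a setoid along a map. -/
def restrS {d : ℕ} (s : Setoid (Fin n)) (e : Fin d → Fin n) : Setoid (Fin d) :=
  ⟨fun a b => s.r (e a) (e b),
    ⟨fun a => s.iseqv.refl _, fun h => s.iseqv.symm h, fun h h' => s.iseqv.trans h h'⟩⟩

lemma restrS_isNC {d : ℕ} {s : Setoid (Fin n)} (hs : IsNC s) {e : Fin d → Fin n}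
    (he : StrictMono e) : IsNC (restrS s e) :=
  fun a b c d' h1 h2 h3 hac hbd => hs _ _ _ _ (he h1) (he h2) (he h3) hac hbd

/-! #### The first-return decomposition data -/

variable {m : ℕ}

def AsetF (s : Setoid (Fin (m + 1))) : Finset (Fin (m + 1)) := (clsF s 0).erase 0

noncomputable def jvalF (s : Setoid (Fin (m + 1))) : ℕ :=
  if h : (AsetF s).Nonempty then ((AsetF s).min' h).1 - 1 else m

lemma mem_AsetF {s : Setoid (Fin (m + 1))} {x : Fin (m + 1)} :
    x ∈ AsetF s ↔ x ≠ 0 ∧ s.r 0 x := by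
  rw [AsetF, Finset.mem_erase, mem_clsF]

lemma jvalF_le (s : Setoid (Fin (m + 1))) : jvalF s ≤ m := by
  rw [jvalF]
  split
  · next h => have := ((AsetF s).min' h).isLt; omega
  · exact le_rfl

lemma jvalF_spec {s : Setoid (Fin (m + 1))} (h : (AsetF s).Nonempty) :
    ((AsetF s).min' h).1 = jvalF s + 1 := by
  have hm := (AsetF s).min'_mem h
  rw [mem_AsetF] at hm
  have h0 : ((AsetF s).min' h).1 ≠ 0 := fun hc => hm.1 (Fin.ext hc)
  rw [jvalF, dif_pos h]
  omega

lemma jvalF_lt {s : Setoid (Fin (m + 1))} (h : (AsetF s).Nonempty) : jvalF s < m := by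
  have := jvalF_spec h
  have := ((AsetF s).min' h).isLt
  omega

lemma jvalF_empty {s : Setoid (Fin (m + 1))} (h : ¬ (AsetF s).Nonempty) : jvalF s = m := by
  rw [jvalF, dif_neg h]

lemma rel_zero_jvalF {s : Setoid (Fin (m + 1))} (h : (AsetF s).Nonempty) {y : Fin (m + 1)}
    (hy : y.1 = jvalF s + 1) : s.r 0 y := by
  have hm := (AsetF s).min'_mem h
  rw [mem_AsetF] at hm
  have : y = (AsetF s).min' h := Fin.ext (by rw [hy, jvalF_spec h])
  rw [this]
  exact hm.2

lemma AsetF_lb {s : Setoid (Fin (m + 1))} {x : Fin (m + 1)} (hx : x ∈ AsetF s) :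
    jvalF s + 1 ≤ x.1 := by
  have h : (AsetF s).Nonempty := ⟨x, hx⟩
  have := (AsetF s).min'_le x hx
  rw [← jvalF_spec h]
  exact this

lemma rel_zero_ge {s : Setoid (Fin (m + 1))} {y : Fin (m + 1)} (hy : s.r 0 y) :
    y = 0 ∨ jvalF s + 1 ≤ y.1 := by
  by_cases h0 : y = 0
  · exact Or.inl h0
  · exact Or.inr (AsetF_lb (mem_AsetF.2 ⟨h0, hy⟩))

lemma sat_left {s : Setoid (Fin (m + 1))} (hs : IsNC s) {x y : Fin (m + 1)}
    (hx1 : 1 ≤ x.1) (hxj : x.1 ≤ jvalF s) (hr : s.r x y) :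
    1 ≤ y.1 ∧ y.1 ≤ jvalF s := by
  have hy0 : 1 ≤ y.1 := by
    rcases Nat.eq_zero_or_pos y.1 with h0 | h
    · exfalso
      have hy : y = 0 := Fin.ext h0
      rw [hy] at hr
      rcases rel_zero_ge (s.iseqv.symm hr) with h | h
      · rw [h] at hx1; simp at hx1
      · omega
    · exact h
  refine ⟨hy0, ?_⟩
  by_contra hgt
  push_neg at hgt
  have hA : (AsetF s).Nonempty := by
    by_contra hA
    have := jvalF_empty hA
    have := y.isLt
    omega
  have hjm : jvalF s < m := jvalF_lt hA
  set zc : Fin (m + 1) := ⟨jvalF s + 1, by omega⟩ with hzc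
  have hz1 : zc.1 = jvalF s + 1 := rfl
  have hz : s.r 0 zc := rel_zero_jvalF hA hz1
  have hx0 : ¬ (x = 0 ∨ jvalF s + 1 ≤ x.1) := by
    rintro (h | h)
    · rw [h] at hx1; simp at hx1
    · omega
  rcases eq_or_lt_of_le (show jvalF s + 1 ≤ y.1 by omega) with heq | hlt
  · have hyz : y = zc := Fin.ext (by omega)
    rw [hyz] at hr
    exact hx0 (rel_zero_ge (s.iseqv.trans hz (s.iseqv.symm hr)))
  · have h01 : (0 : Fin (m + 1)) < x := by
      rw [Fin.lt_def, Fin.val_zero]; omega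
    have h02 : x < zc := by rw [Fin.lt_def, hz1]; omega
    have h03 : zc < y := by rw [Fin.lt_def, hz1]; omega
    exact hx0 (rel_zero_ge (hs 0 x zc y h01 h02 h03 hz hr))

end Comb

section Asm

variable {m : ℕ}

def eLF (j : Fin (m + 1)) : Fin j.1 → Fin (m + 1) :=
  fun a => ⟨a.1 + 1, by have := a.isLt; have := j.isLt; omega⟩

def eRF (j : Fin (m + 1)) : Fin (m - j.1) → Fin (m + 1) :=
  fun a => ⟨a.1 + j.1 + 1, by have := a.isLt; omega⟩

lemma eLF_val (j : Fin (m + 1)) (a : Fin j.1) : (eLF j a).1 = a.1 + 1 := rfl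

lemma eRF_val (j : Fin (m + 1)) (a : Fin (m - j.1)) : (eRF j a).1 = a.1 + j.1 + 1 := rfl

lemma eLF_strictMono (j : Fin (m + 1)) : StrictMono (eLF j) := by
  intro a b h
  rw [Fin.lt_def] at h ⊢
  rw [eLF_val, eLF_val]
  omega

lemma eRF_strictMono (j : Fin (m + 1)) : StrictMono (eRF j) := by
  intro a b h
  rw [Fin.lt_def] at h ⊢
  rw [eRF_val, eRF_val]
  omega

lemma eLF_inj (j : Fin (m + 1)) : Function.Injective (eLF j) :=
  (eLF_strictMono j).injective

lemma eRF_inj (j : Fin (m + 1)) : Function.Injective (eRF j) :=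
  (eRF_strictMono j).injective

/-- The relation assembled from a partition of the left gap, a partition of the right
gap, and the block of `0` glued to the class of the first right element. -/
def asmR (j : Fin (m + 1)) (s₁ : Setoid (Fin j.1)) (s₂ : Setoid (Fin (m - j.1)))
    (x y : Fin (m + 1)) : Prop :=
  x = y ∨
  (∃ a b : Fin j.1, x.1 = a.1 + 1 ∧ y.1 = b.1 + 1 ∧ s₁.r a b) ∨
  (∃ a b : Fin (m - j.1), x.1 = a.1 + j.1 + 1 ∧ y.1 = b.1 + j.1 + 1 ∧ s₂.r a b) ∨
  (∃ a b : Fin (m - j.1), a.1 = 0 ∧ s₂.r a b ∧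
    ((x.1 = 0 ∧ y.1 = b.1 + j.1 + 1) ∨ (y.1 = 0 ∧ x.1 = b.1 + j.1 + 1)))

variable {j : Fin (m + 1)} {s₁ : Setoid (Fin j.1)} {s₂ : Setoid (Fin (m - j.1))}

lemma asmR_symm {x y : Fin (m + 1)} (h : asmR j s₁ s₂ x y) : asmR j s₁ s₂ y x := by
  rcases h with h | ⟨a, b, hx, hy, h⟩ | ⟨a, b, hx, hy, h⟩ | ⟨a, b, ha, h, hc⟩
  · exact Or.inl h.symm
  · exact Or.inr (Or.inl ⟨b, a, hy, hx, s₁.iseqv.symm h⟩)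
  · exact Or.inr (Or.inr (Or.inl ⟨b, a, hy, hx, s₂.iseqv.symm h⟩))
  · exact Or.inr (Or.inr (Or.inr ⟨a, b, ha, h, hc.symm⟩))

lemma asmR_trans {x y z : Fin (m + 1)} (h1 : asmR j s₁ s₂ x y) (h2 : asmR j s₁ s₂ y z) :
    asmR j s₁ s₂ x z := by
  rcases h1 with rfl | ⟨a, b, hx, hy, h⟩ | ⟨a, b, hx, hy, h⟩ | ⟨a, b, ha, h, hc⟩
  · exact h2
  · rcases h2 with rfl | ⟨a', b', hy', hz, h'⟩ | ⟨a', b', hy', hz, h'⟩ | ⟨a', b', ha', h', hc'⟩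
    · exact Or.inr (Or.inl ⟨a, b, hx, hy, h⟩)
    · have hab : b = a' := Fin.ext (by omega)
      exact Or.inr (Or.inl ⟨a, b', hx, hz, s₁.iseqv.trans h (hab ▸ h')⟩)
    · exfalso; have := b.isLt; omega
    · exfalso
      have := b.isLt; have := b'.isLt
      rcases hc' with ⟨h1', h2'⟩ | ⟨h1', h2'⟩ <;> omega
  · rcases h2 with rfl | ⟨a', b', hy', hz, h'⟩ | ⟨a', b', hy', hz, h'⟩ | ⟨a', b', ha', h', hc'⟩
    · exact Or.inr (Or.inr (Or.inl ⟨a, b, hx, hy, h⟩))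
    · exfalso; have := a'.isLt; omega
    · have hab : b = a' := Fin.ext (by omega)
      exact Or.inr (Or.inr (Or.inl ⟨a, b', hx, hz, s₂.iseqv.trans h (hab ▸ h')⟩))
    · rcases hc' with ⟨h1', h2'⟩ | ⟨h1', h2'⟩
      · exfalso; omega
      · have hbb : b' = b := Fin.ext (by omega)
        exact Or.inr (Or.inr (Or.inr
          ⟨a', a, ha', s₂.iseqv.trans h' (hbb ▸ s₂.iseqv.symm h), Or.inr ⟨h1', hx⟩⟩))
  · rcases hc with ⟨hx0, hyv⟩ | ⟨hy0, hxv⟩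
    · rcases h2 with rfl | ⟨a', b', hy', hz, h'⟩ | ⟨a', b', hy', hz, h'⟩ | ⟨a', b', ha', h', hc'⟩
      · exact Or.inr (Or.inr (Or.inr ⟨a, b, ha, h, Or.inl ⟨hx0, hyv⟩⟩))
      · exfalso; have := a'.isLt; have := b.isLt; omega
      · have hba : a' = b := Fin.ext (by omega)
        exact Or.inr (Or.inr (Or.inr
          ⟨a, b', ha, s₂.iseqv.trans h (hba ▸ h'), Or.inl ⟨hx0, hz⟩⟩))
      · rcases hc' with ⟨h1', h2'⟩ | ⟨h1', h2'⟩
        · exfalso; have := b.isLt; omega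
        · exact Or.inl (Fin.ext (by omega))
    · rcases h2 with rfl | ⟨a', b', hy', hz, h'⟩ | ⟨a', b', hy', hz, h'⟩ | ⟨a', b', ha', h', hc'⟩
      · exact Or.inr (Or.inr (Or.inr ⟨a, b, ha, h, Or.inr ⟨hy0, hxv⟩⟩))
      · exfalso; have := a'.isLt; omega
      · exfalso; have := a'.isLt; omega
      · rcases hc' with ⟨h1', h2'⟩ | ⟨h1', h2'⟩
        · have haa : a = a' := Fin.ext (by omega)
          exact Or.inr (Or.inr (Or.inl
            ⟨b, b', hxv, h2', s₂.iseqv.trans (s₂.iseqv.symm h) (haa ▸ h')⟩))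
        · exfalso; have := b'.isLt; omega

def asmS (j : Fin (m + 1)) (s₁ : Setoid (Fin j.1)) (s₂ : Setoid (Fin (m - j.1))) :
    Setoid (Fin (m + 1)) :=
  ⟨asmR j s₁ s₂, ⟨fun _ => Or.inl rfl, asmR_symm, asmR_trans⟩⟩

lemma asmS_r (x y : Fin (m + 1)) : (asmS j s₁ s₂).r x y ↔ asmR j s₁ s₂ x y := Iff.rfl

lemma asmS_isNC (h1 : IsNC s₁) (h2 : IsNC s₂) : IsNC (asmS j s₁ s₂) := by
  intro a b c d hab hbc hcd hac hbd
  rw [Fin.lt_def] at hab hbc hcd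
  rcases hac with heq | ⟨p, q, hap, hcq, h⟩ | ⟨p, q, hap, hcq, h⟩ | ⟨p, q, hp0, h, hc⟩
  · exfalso; have h' := congrArg Fin.val heq; omega
  · rcases hbd with heq | ⟨p', q', hbp', hdq', h'⟩ | ⟨p', q', hbp', hdq', h'⟩ |
      ⟨p', q', hp'0, h', hc'⟩
    · exfalso; have h' := congrArg Fin.val heq; omega
    · refine Or.inr (Or.inl ⟨p, p', hap, hbp', h1 p p' q q' ?_ ?_ ?_ h h'⟩) <;>
        (rw [Fin.lt_def]; omega)
    · exfalso; have := q.isLt; omega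
    · rcases hc' with ⟨h1', h2'⟩ | ⟨h1', h2'⟩
      · exfalso; omega
      · exfalso; have := q.isLt; omega
  · rcases hbd with heq | ⟨p', q', hbp', hdq', h'⟩ | ⟨p', q', hbp', hdq', h'⟩ |
      ⟨p', q', hp'0, h', hc'⟩
    · exfalso; have h' := congrArg Fin.val heq; omega
    · exfalso; have := p'.isLt; omega
    · refine Or.inr (Or.inr (Or.inl ⟨p, p', hap, hbp', h2 p p' q q' ?_ ?_ ?_ h h'⟩)) <;>
        (rw [Fin.lt_def]; omega)
    · rcases hc' with ⟨h1', h2'⟩ | ⟨h1', h2'⟩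
      · exfalso; omega
      · exfalso; omega
  · rcases hc with ⟨ha0, hcv⟩ | ⟨hc0, hav⟩
    · rcases hbd with heq | ⟨p', q', hbp', hdq', h'⟩ | ⟨p', q', hbp', hdq', h'⟩ |
        ⟨p', q', hp'0, h', hc'⟩
      · exfalso; have h' := congrArg Fin.val heq; omega
      · exfalso; have := q'.isLt; omega
      · by_cases hpp : p'.1 = 0
        · have hpe : p = p' := Fin.ext (by omega)
          exact Or.inr (Or.inr (Or.inr
            ⟨p, p', hp0, hpe ▸ s₂.iseqv.refl p, Or.inl ⟨ha0, hbp'⟩⟩))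
        · refine Or.inr (Or.inr (Or.inr
            ⟨p, p', hp0, h2 p p' q q' ?_ ?_ ?_ h h', Or.inl ⟨ha0, hbp'⟩⟩)) <;>
            (rw [Fin.lt_def]; omega)
      · rcases hc' with ⟨h1', h2'⟩ | ⟨h1', h2'⟩
        · exfalso; omega
        · exfalso; omega
    · exfalso; omega

/-! #### Classes of the assembled partition -/

lemma mem_cls0F {d : ℕ} {s : Setoid (Fin d)} {b : Fin d} :
    b ∈ cls0F s ↔ ∀ a : Fin d, a.1 = 0 → s.r a b := by
  simp [cls0F]

lemma cls0F_eq' {d : ℕ} (s : Setoid (Fin d)) {z : Fin d} (hz : z.1 = 0) :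
    cls0F s = clsF s z := by
  ext b
  rw [mem_cls0F, mem_clsF]
  exact ⟨fun h => h z hz, fun h a ha => by
    have : a = z := Fin.ext (by omega)
    rw [this]; exact h⟩

lemma asm_cls_zero :
    clsF (asmS j s₁ s₂) 0 = insert 0 ((cls0F s₂).image (eRF j)) := by
  ext y
  rw [mem_clsF, Finset.mem_insert, Finset.mem_image]
  constructor
  · rintro (h | ⟨a, b, hx, hy, h⟩ | ⟨a, b, hx, hy, h⟩ | ⟨a, b, ha, h, hc⟩)
    · exact Or.inl h.symm
    · exfalso; simp at hx
    · exfalso; simp at hx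
    · rcases hc with ⟨hx0, hyv⟩ | ⟨hy0, hxv⟩
      · refine Or.inr ⟨b, ?_, Fin.ext (by rw [eRF_val]; omega)⟩
        rw [mem_cls0F]
        intro a' ha'
        have : a' = a := Fin.ext (by omega)
        rw [this]; exact h
      · exact Or.inl (Fin.ext (by simpa using hy0))
  · rintro (rfl | ⟨b, hb, rfl⟩)
    · exact Or.inl rfl
    · have hpos : 0 < m - j.1 := by have := b.isLt; omega
      refine Or.inr (Or.inr (Or.inr ⟨⟨0, hpos⟩, b, rfl, ?_, Or.inl ⟨rfl, by rw [eRF_val]⟩⟩))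
      exact mem_cls0F.1 hb ⟨0, hpos⟩ rfl

lemma asm_cls_left (a : Fin j.1) :
    clsF (asmS j s₁ s₂) (eLF j a) = (clsF s₁ a).image (eLF j) := by
  ext y
  rw [mem_clsF, Finset.mem_image]
  constructor
  · rintro (h | ⟨p, q, hx, hy, h⟩ | ⟨p, q, hx, hy, h⟩ | ⟨p, q, hp, h, hc⟩)
    · exact ⟨a, clsF_self s₁ a, h⟩
    · have hpa : p = a := Fin.ext (by have := eLF_val j a; omega)
      exact ⟨q, mem_clsF.2 (hpa ▸ h), Fin.ext (by rw [eLF_val]; omega)⟩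
    · exfalso; have := eLF_val j a; have := a.isLt; omega
    · exfalso
      have := eLF_val j a; have := a.isLt
      rcases hc with ⟨h1', h2'⟩ | ⟨h1', h2'⟩ <;> omega
  · rintro ⟨b, hb, rfl⟩
    exact Or.inr (Or.inl ⟨a, b, rfl, rfl, mem_clsF.1 hb⟩)

lemma asm_cls_right {b : Fin (m - j.1)} (hb : b ∉ cls0F s₂) :
    clsF (asmS j s₁ s₂) (eRF j b) = (clsF s₂ b).image (eRF j) := by
  ext y
  rw [mem_clsF, Finset.mem_image]
  constructor
  · rintro (h | ⟨p, q, hx, hy, h⟩ | ⟨p, q, hx, hy, h⟩ | ⟨p, q, hp, h, hc⟩)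
    · exact ⟨b, clsF_self s₂ b, h⟩
    · exfalso; have := eRF_val j b; have := p.isLt; omega
    · have hpb : p = b := Fin.ext (by have := eRF_val j b; omega)
      exact ⟨q, mem_clsF.2 (hpb ▸ h), Fin.ext (by rw [eRF_val]; omega)⟩
    · exfalso
      rcases hc with ⟨h1', h2'⟩ | ⟨h1', h2'⟩
      · have := eRF_val j b; omega
      · have hqb : q = b := Fin.ext (by have := eRF_val j b; omega)
        exact hb (mem_cls0F.2 fun a' ha' => by
          have : a' = p := Fin.ext (by omega)
          rw [this]; exact hqb ▸ h)
  · rintro ⟨q, hq, rfl⟩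
    exact Or.inr (Or.inr (Or.inl ⟨b, q, rfl, rfl, mem_clsF.1 hq⟩))

lemma asm_cls_right0 {b : Fin (m - j.1)} (hb : b ∈ cls0F s₂) :
    clsF (asmS j s₁ s₂) (eRF j b) = clsF (asmS j s₁ s₂) 0 := by
  have hpos : 0 < m - j.1 := by have := b.isLt; omega
  refine (clsF_eq_of_rel ?_).symm
  exact Or.inr (Or.inr (Or.inr ⟨⟨0, hpos⟩, b, rfl, mem_cls0F.1 hb ⟨0, hpos⟩ rfl,
    Or.inl ⟨rfl, by rw [eRF_val]⟩⟩))

lemma asm_blocks :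
    blocks (asmS j s₁ s₂) = insert (clsF (asmS j s₁ s₂) 0)
      ((blocks s₁).image (Finset.image (eLF j)) ∪
        ((blocks s₂).erase (cls0F s₂)).image (Finset.image (eRF j))) := by
  ext B
  rw [mem_blocks, Finset.mem_insert, Finset.mem_union]
  constructor
  · rintro ⟨x, rfl⟩
    rcases show x.1 = 0 ∨ (1 ≤ x.1 ∧ x.1 ≤ j.1) ∨ j.1 + 1 ≤ x.1 from by omega with
      hx | ⟨hx1, hx2⟩ | hx
    · exact Or.inl (by rw [show x = 0 from Fin.ext hx])
    · have ha : x = eLF j ⟨x.1 - 1, by have := x.isLt; omega⟩ :=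
        Fin.ext (show x.1 = x.1 - 1 + 1 by omega)
      refine Or.inr (Or.inl (Finset.mem_image.2
        ⟨clsF s₁ ⟨x.1 - 1, by have := x.isLt; omega⟩, mem_blocks.2 ⟨_, rfl⟩, ?_⟩))
      exact (asm_cls_left _).symm.trans (congrArg (clsF (asmS j s₁ s₂)) ha).symm
    · have hxm : x.1 ≤ m := by have := x.isLt; omega
      have hxb : x = eRF j ⟨x.1 - j.1 - 1, by omega⟩ :=
        Fin.ext (show x.1 = x.1 - j.1 - 1 + j.1 + 1 by omega)
      by_cases hb : (⟨x.1 - j.1 - 1, by omega⟩ : Fin (m - j.1)) ∈ cls0F s₂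
      · rw [hxb, asm_cls_right0 hb]
        exact Or.inl rfl
      · refine Or.inr (Or.inr (Finset.mem_image.2
          ⟨clsF s₂ ⟨x.1 - j.1 - 1, by omega⟩, ?_, ?_⟩))
        · refine Finset.mem_erase.2 ⟨?_, mem_blocks.2 ⟨_, rfl⟩⟩
          intro hc
          exact hb (by rw [← hc]; exact clsF_self s₂ _)
        · exact (asm_cls_right hb).symm.trans (congrArg (clsF (asmS j s₁ s₂)) hxb).symm
  · rintro (rfl | h | h)
    · exact ⟨0, rfl⟩
    · obtain ⟨B₁, hB₁, rfl⟩ := Finset.mem_image.1 h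
      obtain ⟨a, rfl⟩ := mem_blocks.1 hB₁
      exact ⟨eLF j a, (asm_cls_left a).symm⟩
    · obtain ⟨B₂, hB₂, rfl⟩ := Finset.mem_image.1 h
      rw [Finset.mem_erase] at hB₂
      obtain ⟨b, rfl⟩ := mem_blocks.1 hB₂.2
      have hb : b ∉ cls0F s₂ := by
        intro hbmem
        apply hB₂.1
        have hz : (⟨0, by have := b.isLt; omega⟩ : Fin (m - j.1)).1 = 0 := rfl
        rw [cls0F_eq' s₂ hz]
        exact clsF_eq_of_rel (s₂.iseqv.symm (mem_cls0F.1 hbmem _ rfl))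
      exact ⟨eRF j b, (asm_cls_right hb).symm⟩

end Asm

section Asm2

variable {m : ℕ} {j : Fin (m + 1)} {s₁ : Setoid (Fin j.1)} {s₂ : Setoid (Fin (m - j.1))}

lemma zero_not_mem_imageR (t : Finset (Fin (m - j.1))) :
    (0 : Fin (m + 1)) ∉ t.image (eRF j) := by
  intro h
  obtain ⟨b, _, hb⟩ := Finset.mem_image.1 h
  have h2 := congrArg Fin.val hb
  rw [eRF_val] at h2
  simp at h2

lemma asm_cls0_card : (cls0F (asmS j s₁ s₂)).card = (cls0F s₂).card + 1 := by
  rw [cls0F_eq, asm_cls_zero, Finset.card_insert_of_notMem (zero_not_mem_imageR _),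
    Finset.card_image_of_injective _ (eRF_inj j)]

lemma asm_blocks_erase :
    (blocks (asmS j s₁ s₂)).erase (cls0F (asmS j s₁ s₂)) =
      (blocks s₁).image (Finset.image (eLF j)) ∪
        ((blocks s₂).erase (cls0F s₂)).image (Finset.image (eRF j)) := by
  rw [cls0F_eq, asm_blocks, Finset.erase_insert]
  intro hmem
  rcases Finset.mem_union.1 hmem with h | h
  · obtain ⟨B₁, _, hEq⟩ := Finset.mem_image.1 h
    have h0 : (0 : Fin (m + 1)) ∈ Finset.image (eLF j) B₁ := by
      rw [hEq]; exact clsF_self _ 0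
    obtain ⟨a, _, ha⟩ := Finset.mem_image.1 h0
    have h2 := congrArg Fin.val ha
    rw [eLF_val] at h2
    simp at h2
  · obtain ⟨B₂, _, hEq⟩ := Finset.mem_image.1 h
    refine zero_not_mem_imageR B₂ ?_
    rw [hEq]; exact clsF_self _ 0

lemma cwW_asm (γ : ℕ → ℂ) (r : ℕ) :
    cwW γ r (asmS j s₁ s₂) = wbW γ s₁ * cwW γ (r + 1) s₂ := by
  have hdisj : Disjoint ((blocks s₁).image (Finset.image (eLF j)))
      (((blocks s₂).erase (cls0F s₂)).image (Finset.image (eRF j))) := by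
    rw [Finset.disjoint_left]
    intro B hB1 hB2
    obtain ⟨B₁, hB₁, rfl⟩ := Finset.mem_image.1 hB1
    obtain ⟨B₂, _, hEq⟩ := Finset.mem_image.1 hB2
    obtain ⟨x, hx⟩ := blocks_nonempty hB₁
    have hmem : eLF j x ∈ Finset.image (eRF j) B₂ := by
      rw [hEq]; exact Finset.mem_image_of_mem _ hx
    obtain ⟨y, _, hy⟩ := Finset.mem_image.1 hmem
    have h2 := congrArg Fin.val hy
    rw [eRF_val, eLF_val] at h2
    have := x.isLt
    omega
  have e1 : ∏ B ∈ blocks s₁, γ (Finset.image (eLF j) B).card = ∏ B ∈ blocks s₁, γ B.card :=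
    Finset.prod_congr rfl fun B _ => by rw [Finset.card_image_of_injective _ (eLF_inj j)]
  have e2 : ∏ B ∈ (blocks s₂).erase (cls0F s₂), γ (Finset.image (eRF j) B).card =
      ∏ B ∈ (blocks s₂).erase (cls0F s₂), γ B.card :=
    Finset.prod_congr rfl fun B _ => by rw [Finset.card_image_of_injective _ (eRF_inj j)]
  rw [cwW, cwW, wbW, asm_blocks_erase, Finset.prod_union hdisj,
    Finset.prod_image (fun x _ y _ h => Finset.image_injective (eLF_inj j) h),
    Finset.prod_image (fun x _ y _ h => Finset.image_injective (eRF_inj j) h),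
    e1, e2, asm_cls0_card,
    show (cls0F s₂).card + 1 + r = (cls0F s₂).card + (r + 1) from by omega]
  ring

lemma asm_AsetF : AsetF (asmS j s₁ s₂) = (cls0F s₂).image (eRF j) := by
  rw [AsetF, asm_cls_zero, Finset.erase_insert (zero_not_mem_imageR _)]

lemma asm_jvalF : jvalF (asmS j s₁ s₂) = j.1 := by
  by_cases hd : 0 < m - j.1
  · have hz : (⟨0, hd⟩ : Fin (m - j.1)) ∈ cls0F s₂ :=
      mem_cls0F.2 fun a ha => by
        have hae : a = ⟨0, hd⟩ := Fin.ext ha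
        subst hae
        exact s₂.iseqv.refl _
    have hmem : eRF j ⟨0, hd⟩ ∈ AsetF (asmS j s₁ s₂) := by
      rw [asm_AsetF]; exact Finset.mem_image_of_mem _ hz
    have hA : (AsetF (asmS j s₁ s₂)).Nonempty := ⟨_, hmem⟩
    have hspec := jvalF_spec hA
    have h1 : ((AsetF (asmS j s₁ s₂)).min' hA).1 ≤ (eRF j ⟨0, hd⟩).1 :=
      Fin.le_def.1 (Finset.min'_le _ _ hmem)
    have h0 : (⟨0, hd⟩ : Fin (m - j.1)).1 = 0 := rfl
    have h2 : ∀ y ∈ AsetF (asmS j s₁ s₂), eRF j ⟨0, hd⟩ ≤ y := by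
      intro y hy
      rw [asm_AsetF] at hy
      obtain ⟨b, _, rfl⟩ := Finset.mem_image.1 hy
      rw [Fin.le_def, eRF_val, eRF_val, h0]
      omega
    have h3 : (eRF j ⟨0, hd⟩).1 ≤ ((AsetF (asmS j s₁ s₂)).min' hA).1 :=
      Fin.le_def.1 (Finset.le_min' _ hA _ h2)
    have h4 : (eRF j ⟨0, hd⟩).1 = j.1 + 1 := by rw [eRF_val, h0]; omega
    omega
  · have hA : ¬(AsetF (asmS j s₁ s₂)).Nonempty := by
      rw [asm_AsetF]
      rintro ⟨y, hy⟩
      obtain ⟨b, _, _⟩ := Finset.mem_image.1 hy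
      have := b.isLt; omega
    have := jvalF_empty hA
    have := j.isLt
    omega

lemma asm_rel_left (a b : Fin j.1) :
    (asmS j s₁ s₂).r (eLF j a) (eLF j b) ↔ s₁.r a b := by
  constructor
  · rintro (h | ⟨p, q, hx, hy, h⟩ | ⟨p, q, hx, hy, h⟩ | ⟨p, q, hp, h, hc⟩)
    · have hab : a = b := eLF_inj j h
      exact hab ▸ s₁.iseqv.refl a
    · have hva := eLF_val j a
      have hvb := eLF_val j b
      have hpa : p = a := Fin.ext (by omega)
      have hqb : q = b := Fin.ext (by omega)
      exact hpa ▸ hqb ▸ h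
    · exfalso; have := eLF_val j a; have := a.isLt; omega
    · exfalso
      have := eLF_val j a; have := eLF_val j b
      rcases hc with ⟨h1, h2⟩ | ⟨h1, h2⟩ <;> omega
  · intro h
    exact Or.inr (Or.inl ⟨a, b, rfl, rfl, h⟩)

lemma asm_rel_right (a b : Fin (m - j.1)) :
    (asmS j s₁ s₂).r (eRF j a) (eRF j b) ↔ s₂.r a b := by
  constructor
  · rintro (h | ⟨p, q, hx, hy, h⟩ | ⟨p, q, hx, hy, h⟩ | ⟨p, q, hp, h, hc⟩)
    · have hab : a = b := eRF_inj j h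
      exact hab ▸ s₂.iseqv.refl a
    · exfalso; have := eRF_val j a; have := p.isLt; omega
    · have hva := eRF_val j a
      have hvb := eRF_val j b
      have hpa : p = a := Fin.ext (by omega)
      have hqb : q = b := Fin.ext (by omega)
      exact hpa ▸ hqb ▸ h
    · exfalso
      have := eRF_val j a; have := eRF_val j b
      rcases hc with ⟨h1, h2⟩ | ⟨h1, h2⟩ <;> omega
  · intro h
    exact Or.inr (Or.inr (Or.inl ⟨a, b, rfl, rfl, h⟩))

end Asm2

section Fwd

variable {m : ℕ}

lemma eLF_ext {jf x : Fin (m + 1)} (h1 : 1 ≤ x.1) (h2 : x.1 ≤ jf.1) :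
    eLF jf ⟨x.1 - 1, by have := jf.isLt; omega⟩ = x :=
  Fin.ext (show x.1 - 1 + 1 = x.1 by omega)

lemma eRF_ext {jf x : Fin (m + 1)} (h1 : jf.1 + 1 ≤ x.1) :
    eRF jf ⟨x.1 - jf.1 - 1, by have := x.isLt; omega⟩ = x :=
  Fin.ext (show x.1 - jf.1 - 1 + jf.1 + 1 = x.1 by omega)

lemma asmS_restr_eq {s : Setoid (Fin (m + 1))} (hs : IsNC s) (jf : Fin (m + 1))
    (hj : jf.1 = jvalF s) :
    asmS jf (restrS s (eLF jf)) (restrS s (eRF jf)) = s := by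
  apply Setoid.ext
  intro x y
  constructor
  · rintro (rfl | ⟨a, b, hx, hy, h⟩ | ⟨a, b, hx, hy, h⟩ | ⟨a, b, ha, h, hc⟩)
    · exact s.iseqv.refl x
    · have hxe : eLF jf a = x := Fin.ext (by rw [eLF_val]; omega)
      have hye : eLF jf b = y := Fin.ext (by rw [eLF_val]; omega)
      exact hxe ▸ hye ▸ h
    · have hxe : eRF jf a = x := Fin.ext (by rw [eRF_val]; omega)
      have hye : eRF jf b = y := Fin.ext (by rw [eRF_val]; omega)
      exact hxe ▸ hye ▸ h
    · have hA : (AsetF s).Nonempty := by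
        by_contra hA
        have := jvalF_empty hA
        have := a.isLt
        omega
      have h0a : s.r 0 (eRF jf a) := rel_zero_jvalF hA (by rw [eRF_val]; omega)
      rcases hc with ⟨hx0, hyv⟩ | ⟨hy0, hxv⟩
      · have hxx : x = 0 := Fin.ext hx0
        have hye : eRF jf b = y := Fin.ext (by rw [eRF_val]; omega)
        rw [hxx, ← hye]
        exact s.iseqv.trans h0a h
      · have hyy : y = 0 := Fin.ext hy0
        have hxe : eRF jf b = x := Fin.ext (by rw [eRF_val]; omega)
        rw [hyy, ← hxe]
        exact s.iseqv.symm (s.iseqv.trans h0a h)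
  · intro hr
    rcases show x.1 = 0 ∨ (1 ≤ x.1 ∧ x.1 ≤ jf.1) ∨ jf.1 + 1 ≤ x.1 from by omega with
      hx0 | ⟨hx1, hx2⟩ | hx
    · have hxx : x = 0 := Fin.ext hx0
      rcases rel_zero_ge (hxx ▸ hr) with hy0 | hy
      · exact Or.inl (hxx.trans hy0.symm)
      · have hyb : jf.1 + 1 ≤ y.1 := by omega
        have hpos : 0 < m - jf.1 := by have := y.isLt; omega
        have hA : (AsetF s).Nonempty := by
          refine ⟨y, mem_AsetF.2 ⟨?_, hxx ▸ hr⟩⟩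
          intro h0
          have := congrArg Fin.val h0
          simp at this
          omega
        have h00 : (⟨0, hpos⟩ : Fin (m - jf.1)).1 = 0 := rfl
        have h0a : s.r 0 (eRF jf ⟨0, hpos⟩) :=
          rel_zero_jvalF hA (by rw [eRF_val, h00]; omega)
        refine Or.inr (Or.inr (Or.inr ⟨⟨0, hpos⟩, ⟨y.1 - jf.1 - 1, by have := y.isLt; omega⟩,
          rfl, ?_, Or.inl ⟨hx0, show y.1 = y.1 - jf.1 - 1 + jf.1 + 1 from by omega⟩⟩))
        show s.r (eRF jf _) (eRF jf _)
        rw [eRF_ext hyb]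
        exact s.iseqv.trans (s.iseqv.symm h0a) (hxx ▸ hr)
    · have hyL := sat_left hs hx1 (hj ▸ hx2) hr
      refine Or.inr (Or.inl ⟨⟨x.1 - 1, by omega⟩, ⟨y.1 - 1, by omega⟩,
        show x.1 = x.1 - 1 + 1 from by omega, show y.1 = y.1 - 1 + 1 from by omega, ?_⟩)
      show s.r (eLF jf _) (eLF jf _)
      rw [eLF_ext hx1 hx2, eLF_ext hyL.1 (by omega)]
      exact hr
    · rcases show y.1 = 0 ∨ (1 ≤ y.1 ∧ y.1 ≤ jf.1) ∨ jf.1 + 1 ≤ y.1 from by omega with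
        hy0 | ⟨hy1, hy2⟩ | hy
      · have hyy : y = 0 := Fin.ext hy0
        have hrx : s.r 0 x := s.iseqv.symm (hyy ▸ hr)
        rcases rel_zero_ge hrx with hx0' | hxge
        · exact Or.inl (by rw [hx0', hyy])
        · have hpos : 0 < m - jf.1 := by have := x.isLt; omega
          have hA : (AsetF s).Nonempty := by
            refine ⟨x, mem_AsetF.2 ⟨?_, hrx⟩⟩
            intro h0
            have := congrArg Fin.val h0
            simp at this
            omega
          have h00 : (⟨0, hpos⟩ : Fin (m - jf.1)).1 = 0 := rfl
          have h0a : s.r 0 (eRF jf ⟨0, hpos⟩) :=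
            rel_zero_jvalF hA (by rw [eRF_val, h00]; omega)
          refine Or.inr (Or.inr (Or.inr ⟨⟨0, hpos⟩, ⟨x.1 - jf.1 - 1, by have := x.isLt; omega⟩,
            rfl, ?_, Or.inr ⟨hy0, show x.1 = x.1 - jf.1 - 1 + jf.1 + 1 from by omega⟩⟩))
          show s.r (eRF jf _) (eRF jf _)
          rw [eRF_ext hx]
          exact s.iseqv.trans (s.iseqv.symm h0a) hrx
      · have := sat_left hs hy1 (hj ▸ hy2) (s.iseqv.symm hr)
        omega
      · refine Or.inr (Or.inr (Or.inl ⟨⟨x.1 - jf.1 - 1, by have := x.isLt; omega⟩,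
          ⟨y.1 - jf.1 - 1, by have := y.isLt; omega⟩,
          show x.1 = x.1 - jf.1 - 1 + jf.1 + 1 from by omega,
          show y.1 = y.1 - jf.1 - 1 + jf.1 + 1 from by omega, ?_⟩))
        show s.r (eRF jf _) (eRF jf _)
        rw [eRF_ext hx, eRF_ext hy]
        exact hr

noncomputable def ncFwd (π : NC (m + 1)) : Σ jf : Fin (m + 1), NC jf.1 × NC (m - jf.1) :=
  ⟨⟨jvalF π.1, by have := jvalF_le π.1; omega⟩,
    ⟨restrS π.1 (eLF ⟨jvalF π.1, by have := jvalF_le π.1; omega⟩),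
      restrS_isNC π.2 (eLF_strictMono _)⟩,
    ⟨restrS π.1 (eRF ⟨jvalF π.1, by have := jvalF_le π.1; omega⟩),
      restrS_isNC π.2 (eRF_strictMono _)⟩⟩

noncomputable def ncAsm (d : Σ jf : Fin (m + 1), NC jf.1 × NC (m - jf.1)) : NC (m + 1) :=
  ⟨asmS d.1 d.2.1.1 d.2.2.1, asmS_isNC d.2.1.2 d.2.2.2⟩

lemma ncAsm_ncFwd (π : NC (m + 1)) : ncAsm (ncFwd π) = π :=
  Subtype.ext (asmS_restr_eq π.2 _ rfl)

lemma ncAsm_inj : Function.Injective (ncAsm (m := m)) := by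
  rintro ⟨j, ⟨s₁, h₁⟩, ⟨s₂, h₂⟩⟩ ⟨j', ⟨s₁', h₁'⟩, ⟨s₂', h₂'⟩⟩ h
  have hs : asmS j s₁ s₂ = asmS j' s₁' s₂' := congrArg Subtype.val h
  have hj : j = j' := by
    apply Fin.ext
    rw [← asm_jvalF (j := j) (s₁ := s₁) (s₂ := s₂),
      ← asm_jvalF (j := j') (s₁ := s₁') (s₂ := s₂'), hs]
  subst hj
  have e1 : s₁ = s₁' := Setoid.ext fun a b => by
    show s₁.r a b ↔ s₁'.r a b
    rw [← asm_rel_left (s₂ := s₂) a b, ← asm_rel_left (s₂ := s₂') a b, hs]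
  have e2 : s₂ = s₂' := Setoid.ext fun a b => by
    show s₂.r a b ↔ s₂'.r a b
    rw [← asm_rel_right (s₁ := s₁) a b, ← asm_rel_right (s₁ := s₁') a b, hs]
  subst e1
  subst e2
  rfl

lemma ncAsm_bij : Function.Bijective (ncAsm (m := m)) :=
  ⟨ncAsm_inj, fun π => ⟨ncFwd π, ncAsm_ncFwd π⟩⟩

lemma cSum_succ (γ : ℕ → ℂ) (r : ℕ) :
    cSum γ r (m + 1) = ∑ i ∈ Finset.range (m + 1), bSum γ i * cSum γ (r + 1) (m - i) := by
  have hb := Fintype.sum_bijective (ncAsm (m := m)) ncAsm_bij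
    (fun d => wbW γ d.2.1.1 * cwW γ (r + 1) d.2.2.1)
    (fun π => cwW γ r π.1)
    (fun d => by
      obtain ⟨j, ⟨s₁, h₁⟩, ⟨s₂, h₂⟩⟩ := d
      exact (cwW_asm γ r).symm)
  rw [cSum, ← hb, ← Finset.univ_sigma_univ, Finset.sum_sigma]
  have h1 : ∀ jf : Fin (m + 1),
      (∑ p : NC jf.1 × NC (m - jf.1), wbW γ p.1.1 * cwW γ (r + 1) p.2.1) =
        bSum γ jf.1 * cSum γ (r + 1) (m - jf.1) := by
    intro jf
    rw [Fintype.sum_prod_type, bSum, cSum, Finset.sum_mul_sum]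
  rw [Finset.sum_congr rfl fun jf _ => h1 jf]
  exact Fin.sum_univ_eq_sum_range (fun i => bSum γ i * cSum γ (r + 1) (m - i)) (m + 1)

end Fwd

section GenFun

open PowerSeries

noncomputable def BsS (γ : ℕ → ℂ) : PowerSeries ℂ := PowerSeries.mk (bSum γ)

noncomputable def CsS (γ : ℕ → ℂ) (r : ℕ) : PowerSeries ℂ := PowerSeries.mk (cSum γ r)

lemma coeff_BsS (γ : ℕ → ℂ) (k : ℕ) : coeff (R := ℂ) k (BsS γ) = bSum γ k :=
  PowerSeries.coeff_mk k _

lemma coeff_CsS (γ : ℕ → ℂ) (r k : ℕ) : coeff (R := ℂ) k (CsS γ r) = cSum γ r k :=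
  PowerSeries.coeff_mk k _

lemma CsS_eq (γ : ℕ → ℂ) (r : ℕ) :
    CsS γ r = C (R := ℂ) (γ r) + X * BsS γ * CsS γ (r + 1) := by
  ext k
  cases k with
  | zero =>
    rw [coeff_CsS, cSum_zero, map_add, coeff_zero_C, mul_assoc]
    rw [show (coeff (R := ℂ) 0) (X * (BsS γ * CsS γ (r + 1))) = 0 by
      rw [coeff_zero_eq_constantCoeff, map_mul, constantCoeff_X, zero_mul]]
    ring
  | succ k =>
    rw [coeff_CsS, cSum_succ, map_add, coeff_C, if_neg (Nat.succ_ne_zero k), mul_assoc,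
      coeff_succ_X_mul, coeff_mul, Finset.Nat.sum_antidiagonal_eq_sum_range_succ_mk, zero_add]
    refine Finset.sum_congr rfl fun i _ => ?_
    rw [coeff_BsS, coeff_CsS]

lemma CsS_unroll (γ : ℕ → ℂ) (N : ℕ) : CsS γ 0 =
    (∑ ℓ ∈ Finset.range (N + 1), C (R := ℂ) (γ ℓ) * (X * BsS γ) ^ ℓ) +
      (X * BsS γ) ^ (N + 1) * CsS γ (N + 1) := by
  induction N with
  | zero =>
    rw [CsS_eq γ 0, Finset.sum_range_one]
    ring
  | succ N ih =>
    rw [Finset.sum_range_succ, ih, CsS_eq γ (N + 1)]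
    ring

lemma coeff_pow_mul_eq_zero {q g : PowerSeries ℂ} (hg : constantCoeff (R := ℂ) g = 0)
    {k N : ℕ} (h : k < N) : coeff (R := ℂ) k (g ^ N * q) = 0 := by
  obtain ⟨p, hp⟩ : (X : PowerSeries ℂ) ^ N ∣ g ^ N * q :=
    Dvd.dvd.mul_right (pow_dvd_pow_of_dvd (X_dvd_iff.mpr hg) N) q
  rw [hp, coeff_mul]
  refine Finset.sum_eq_zero fun p' hp' => ?_
  rw [Finset.HasAntidiagonal.mem_antidiagonal] at hp'
  rw [coeff_X_pow, if_neg (by omega), zero_mul]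

lemma bSum_eq_comp (γ : ℕ → ℂ) (k : ℕ) :
    bSum γ (k + 1) = ∑ ℓ ∈ Finset.range (k + 2), γ ℓ * coeff (R := ℂ) (k + 1) ((X * BsS γ) ^ ℓ) := by
  have hX : constantCoeff (R := ℂ) (X * BsS γ) = 0 := by
    rw [map_mul, constantCoeff_X, zero_mul]
  have h1 : bSum γ (k + 1) = coeff (R := ℂ) (k + 1) (CsS γ 0) := by
    rw [coeff_CsS, bSum_succ]
  rw [h1, CsS_unroll γ (k + 1), map_add, map_sum,
    coeff_pow_mul_eq_zero hX (by omega), add_zero]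
  exact Finset.sum_congr rfl fun ℓ _ => by rw [coeff_C_mul]

end GenFun

/-- Lemma 6.2.  For `μ ∈ G_1` with `R_μ(z) = z + ∑_{n≥2} α_n zⁿ`,
S-transform `S` and `T = 1/S = 1 + ∑ γ_n zⁿ`, one has, for every `n ≥ 2`,
`α_n = ∑_{π = {A_1,…,A_q} ∈ NC(n-1)} γ_{|A_1|} ⋯ γ_{|A_q|}`. -/
theorem R_coeff_from_inv_S (μ α : Dist 1) (hμ : InG μ) (hα : IsRTransform μ α)
    (S T : PowerSeries ℂ) (hS : SChar α S) (hT : S * T = 1)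
    (n : ℕ) (hn : 2 ≤ n) :
    α ⟨n, fun _ => 0⟩ =
      ∑ π : NC (n - 1), ∏ B ∈ blocks π.1, PowerSeries.coeff (R := ℂ) B.card T := by
  classical
  set γ : ℕ → ℂ := fun k => PowerSeries.coeff (R := ℂ) k T with hγdef
  have hT0 : PowerSeries.constantCoeff (R := ℂ) T = 1 := by
    have h := congrArg (PowerSeries.constantCoeff (R := ℂ)) hT
    rw [map_mul, hS.1, one_mul, map_one] at h
    exact h
  have hF0 : PowerSeries.constantCoeff (R := ℂ) (PowerSeries.X * BsS γ) = 0 := by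
    rw [map_mul, PowerSeries.constantCoeff_X, zero_mul]
  have hR0 : PowerSeries.constantCoeff (R := ℂ) (Rser α) = 0 := by
    rw [← PowerSeries.coeff_zero_eq_constantCoeff, Rser, PowerSeries.coeff_mk, if_pos rfl]
  have hFeq : PowerSeries.X * BsS γ
      = PowerSeries.X * psComp T (PowerSeries.X * BsS γ) := by
    ext k
    cases k with
    | zero =>
      rw [← PowerSeries.coeff_zero_eq_constantCoeff] at hF0
      rw [hF0, PowerSeries.coeff_zero_eq_constantCoeff, map_mul,
        PowerSeries.constantCoeff_X, zero_mul]
    | succ k =>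
      rw [PowerSeries.coeff_succ_X_mul, PowerSeries.coeff_succ_X_mul, coeff_BsS, coeff_psComp]
      cases k with
      | zero =>
        rw [bSum_zero, Finset.sum_range_one, pow_zero]
        rw [PowerSeries.coeff_zero_eq_constantCoeff, hT0, map_one, one_mul]
      | succ k' =>
        exact bSum_eq_comp γ k'
  have hSC : psComp (PowerSeries.X * S) (PowerSeries.X * BsS γ) = PowerSeries.X := by
    rw [psComp_mul hF0, psComp_X hF0]
    nth_rewrite 1 [hFeq]
    rw [mul_assoc, ← psComp_mul hF0, mul_comm T S, hT, psComp_one, mul_one]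
  have hRF : Rser α = PowerSeries.X * BsS γ :=
    psComp_XS_inj hS.1 hR0 hF0 (hS.2.2.trans hSC.symm)
  obtain ⟨k, rfl⟩ : ∃ k, n = k + 2 := ⟨n - 2, by omega⟩
  have h1 : α ⟨k + 2, fun _ => 0⟩ = PowerSeries.coeff (R := ℂ) (k + 2) (Rser α) := by
    rw [Rser, PowerSeries.coeff_mk, if_neg (by omega)]
  rw [h1, hRF, PowerSeries.coeff_succ_X_mul, coeff_BsS, bSum]
  exact Finset.sum_congr rfl fun π _ => rfl

end FreeProb

end
end
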